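/- Let k ≥ 2 be an integer, let p ∈ (1, ∞) and let q satisfy 1/p + 1/q = 1. Define B_{k,1} as the infimum, over all integers n ≥ k and all positive vectors x = (x_1,…,x_n), of (1/n) · k · Σ_{j=1}^n x_j/(x_{j+1} + … + x_{j+k}) (indices modulo n), and define U_t(k) = (k^t − 1)^t · t^{−t} for t > 0. Then for every integer n ≥ k and every positive vector x = (x_1, …, x_n), Σ_{j=1}^n x_j / ((x_{j+1}^p + … + x_{j+k}^p)/k)^{1/p} ≥ n · B_{k,1}^{1/p} · (k^{−1/q²}/(k − 1)) · U_{1/p}(k) · U_{1/q}(k). -/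

import Mathlib

open Finset

private lemma sd_mod {x : ℕ → ℝ} {n : ℕ} (hper : ∀ j, x (j + n) = x j) :
    ∀ m, x m = x (m % n) := by
  intro m
  induction m using Nat.strong_induction_on with
  | _ m ih =>
    rcases lt_or_ge m n with h | h
    · rw [Nat.mod_eq_of_lt h]
    · rcases Nat.eq_zero_or_pos n with rfl | hn
      · simp
      · have h1 : m - n + n = m := Nat.sub_add_cancel h
        have h2 : m - n < m := by omega
        have h3 := hper (m - n)
        rw [h1] at h3
        rw [h3, ih _ h2, ← Nat.mod_eq_sub_mod h]

private lemma sd_telescope (f : ℕ → ℝ) (hf : ∀ i, 0 < f i) :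
    ∀ L, ∏ i ∈ Finset.range L, f i / f (i + 1) = f 0 / f L := by
  intro L
  induction L with
  | zero => simp [div_self (hf 0).ne']
  | succ m ih =>
    rw [Finset.prod_range_succ, ih]
    rw [div_mul_div_comm]
    rw [mul_comm (f 0) (f m), mul_div_mul_left _ _ (hf m).ne']

private lemma sd_cycle {n k : ℕ} (hn : 0 < n) (h d : ℕ → ℕ)
    (hd1 : ∀ j, 1 ≤ d j) (hdk : ∀ j, d j ≤ k) (hh : ∀ j, h j = (j + d j) % n) :
    ∃ c L, c < n ∧ 0 < L ∧ n ≤ L * k ∧ h^[L] c = c ∧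
      ∀ i j, i < L → j < L → h^[i] c = h^[j] c → i = j := by
  have hrange : ∀ j, h j < n := fun j => by rw [hh]; exact Nat.mod_lt _ hn
  -- find some point on a cycle
  have key : ∃ c0, c0 < n ∧ ∃ m, 0 < m ∧ h^[m] c0 = c0 := by
    have hmaps : ∀ i ∈ Finset.range (n + 1), h^[i + 1] 0 ∈ Finset.range n := by
      intro i _
      rw [Function.iterate_succ_apply']
      exact Finset.mem_range.2 (hrange _)
    obtain ⟨a, _, b, _, hab, heq⟩ :=
      Finset.exists_ne_map_eq_of_card_lt_of_maps_to (by simp) hmaps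
    have main : ∀ a b : ℕ, a < b → h^[a + 1] 0 = h^[b + 1] 0 →
        ∃ c0, c0 < n ∧ ∃ m, 0 < m ∧ h^[m] c0 = c0 := by
      intro a b hab heq
      refine ⟨h^[a + 1] 0, by rw [Function.iterate_succ_apply']; exact hrange _,
        b - a, by omega, ?_⟩
      rw [← Function.iterate_add_apply]
      have : b - a + (a + 1) = b + 1 := by omega
      rw [this, ← heq]
    rcases hab.lt_or_gt with hlt | hlt
    · exact main a b hlt heq
    · exact main b a hlt heq.symm
  obtain ⟨c, hc, hex⟩ := key
  classical
  let L := Nat.find hex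
  obtain ⟨hL0, hLc⟩ : 0 < L ∧ h^[L] c = c := Nat.find_spec hex
  have hmin : ∀ m, m < L → ¬(0 < m ∧ h^[m] c = c) := fun m hm => Nat.find_min hex hm
  refine ⟨c, L, hc, hL0, ?_, hLc, ?_⟩
  · -- step-sum argument
    have horb : ∀ i, h^[i] c < n := by
      intro i
      cases i with
      | zero => exact hc
      | succ i => rw [Function.iterate_succ_apply']; exact hrange _
    have hiter : ∀ m : ℕ, h^[m] c = (c + ∑ i ∈ Finset.range m, d (h^[i] c)) % n := by
      intro m
      induction m with
      | zero => simpa using (Nat.mod_eq_of_lt hc).symm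
      | succ m ih =>
        rw [Function.iterate_succ_apply', hh, Finset.sum_range_succ]
        set D := d (h^[m] c) with hD
        rw [ih, Nat.mod_add_mod, Nat.add_assoc]
    set T := ∑ i ∈ Finset.range L, d (h^[i] c) with hT
    have hTL : (c + T) % n = c % n := by
      rw [← hiter, hLc, Nat.mod_eq_of_lt hc]
    have hdvd : n ∣ T := by
      have : (c + T) % n = (c + 0) % n := by simpa using hTL
      have h2 : T % n = 0 % n := Nat.ModEq.add_left_cancel' c this
      simpa [Nat.dvd_iff_mod_eq_zero] using h2
    have hTge : L ≤ T := by
      calc L = ∑ _i ∈ Finset.range L, 1 := by simp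
      _ ≤ T := Finset.sum_le_sum fun i _ => hd1 _
    have hTpos : 0 < T := lt_of_lt_of_le hL0 hTge
    have hnT : n ≤ T := Nat.le_of_dvd hTpos hdvd
    have hTle : T ≤ L * k := by
      calc T ≤ ∑ _i ∈ Finset.range L, k := Finset.sum_le_sum fun i _ => hdk _
      _ = L * k := by simp [Finset.sum_const, Nat.smul_one_eq_cast, mul_comm]
    omega
  · -- injectivity on range L
    intro i j hi hj hij
    by_contra hne
    have main : ∀ i j, i < L → j < L → i < j → h^[i] c = h^[j] c → False := by
      intro i j hi hj hlt heq
      have : h^[L - j + i] c = c := by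
        rw [Function.iterate_add_apply]
        rw [heq, ← Function.iterate_add_apply]
        have : L - j + j = L := by omega
        rw [this, hLc]
      exact hmin (L - j + i) (by omega) ⟨by omega, this⟩
    rcases Nat.lt_or_ge i j with hlt | hge
    · exact main i j hi hj hlt hij
    · exact main j i hj hi (by omega) hij.symm

private lemma sd_chord {κ t u v : ℝ} (hκ : 1 < κ) (ht : 0 < t) (hu : 0 < u)
    (htu : t + u = 1) (hv1 : 1 / κ ≤ v) (hv2 : v ≤ 1) :
    (κ - κ ^ t) / (κ - 1) * v + (κ ^ t - 1) / (κ - 1) ≤ v ^ u := by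
  have hκ0 : 0 < κ := by linarith
  have hden : 0 < 1 - 1 / κ := by
    have : 1 / κ < 1 := by rw [div_lt_one hκ0]; exact hκ
    linarith
  have hκm1 : κ - 1 ≠ 0 := by linarith
  have hκm1' : (-1 : ℝ) + κ ≠ 0 := by linarith
  have hκne : κ ≠ 0 := hκ0.ne'
  have hdenne : 1 - 1 / κ ≠ 0 := hden.ne'
  have hlam : 0 ≤ (1 - v) / (1 - 1 / κ) := div_nonneg (by linarith) hden.le
  have hmu : 0 ≤ (v - 1 / κ) / (1 - 1 / κ) := div_nonneg (by linarith) hden.le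
  have hsum : (1 - v) / (1 - 1 / κ) + (v - 1 / κ) / (1 - 1 / κ) = 1 := by
    rw [← add_div, div_eq_one_iff_eq hdenne]
    ring
  have hconc := (Real.concaveOn_rpow hu.le (by linarith : u ≤ 1)).2
    (Set.mem_Ici.2 (by positivity : (0:ℝ) ≤ 1 / κ)) (Set.mem_Ici.2 (by norm_num : (0:ℝ) ≤ 1))
    hlam hmu hsum
  have hcomb : (1 - v) / (1 - 1 / κ) * (1 / κ) + (v - 1 / κ) / (1 - 1 / κ) * (1:ℝ) = v := by
    field_simp
    ring
  simp only [smul_eq_mul] at hconc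
  rw [hcomb] at hconc
  have hκtu : κ ^ t * κ ^ u = κ := by
    rw [← Real.rpow_add hκ0, htu, Real.rpow_one]
  have hκu : κ ^ u = κ / κ ^ t := by
    rw [eq_div_iff (Real.rpow_pos_of_pos hκ0 t).ne', mul_comm]
    exact hκtu
  have h1κu : (1 / κ) ^ u = κ ^ t / κ := by
    rw [one_div, Real.inv_rpow hκ0.le, hκu, inv_div]
  calc (κ - κ ^ t) / (κ - 1) * v + (κ ^ t - 1) / (κ - 1)
      = (1 - v) / (1 - 1 / κ) * ((1 / κ) ^ u) + (v - 1 / κ) / (1 - 1 / κ) * (1:ℝ) ^ u := by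
        rw [h1κu, Real.one_rpow]
        have hκ1 : κ - 1 ≠ 0 := by linarith
        field_simp
        ring
    _ ≤ v ^ u := hconc

private lemma sd_term (k : ℕ) (hk : 2 ≤ k) (p t u : ℝ) (hp : 1 < p)
    (ht : t = 1 / p) (hu : u = 1 - t)
    (y : ℝ) (hy : 0 < y) (w : ℕ → ℝ) (hw : ∀ i, 0 < w i)
    (i0 : ℕ) (hi0 : i0 ∈ Finset.range k) (hmax : ∀ i ∈ Finset.range k, w i ≤ w i0) :
    ((k:ℝ) - (k:ℝ) ^ t) / ((k:ℝ) - 1) * (y / w i0)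
      + ((k:ℝ) ^ t - 1) / ((k:ℝ) - 1) * (y * k / ∑ i ∈ Finset.range k, w i)
    ≤ y / (((∑ i ∈ Finset.range k, w i ^ p) / (k:ℝ)) ^ t) := by
  have hκ1 : (1:ℝ) < (k:ℝ) := by exact_mod_cast (by omega : 1 < k)
  have hκ0 : (0:ℝ) < (k:ℝ) := by linarith
  have hp0 : 0 < p := by linarith
  have ht0 : 0 < t := by rw [ht]; positivity
  have ht1 : t < 1 := by rw [ht, div_lt_one hp0]; linarith
  have hu0 : 0 < u := by rw [hu]; linarith
  have htu : t + u = 1 := by rw [hu]; ring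
  have hM0 : 0 < w i0 := hw i0
  have hS10 : 0 < ∑ i ∈ Finset.range k, w i :=
    Finset.sum_pos (fun i _ => hw i) ⟨i0, hi0⟩
  have hSp0 : 0 < ∑ i ∈ Finset.range k, w i ^ p :=
    Finset.sum_pos (fun i _ => Real.rpow_pos_of_pos (hw i) p) ⟨i0, hi0⟩
  have hMS : w i0 ≤ ∑ i ∈ Finset.range k, w i :=
    Finset.single_le_sum (fun i _ => (hw i).le) hi0
  have hSM : (∑ i ∈ Finset.range k, w i) ≤ (k:ℝ) * w i0 := by
    calc (∑ i ∈ Finset.range k, w i) ≤ (Finset.range k).card • w i0 :=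
        Finset.sum_le_card_nsmul _ _ _ hmax
    _ = (k:ℝ) * w i0 := by rw [Finset.card_range, nsmul_eq_mul]
  have hstep1 : (∑ i ∈ Finset.range k, w i ^ p)
      ≤ (∑ i ∈ Finset.range k, w i) * w i0 ^ (p - 1) := by
    rw [Finset.sum_mul]
    refine Finset.sum_le_sum fun i hi => ?_
    have h1 : w i ^ p = w i * w i ^ (p - 1) := by
      nth_rewrite 1 [show p = 1 + (p - 1) by ring]
      rw [Real.rpow_add (hw i), Real.rpow_one]
    rw [h1]
    exact mul_le_mul_of_nonneg_left
      (Real.rpow_le_rpow (hw i).le (hmax i hi) (by linarith)) (hw i).le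
  have hud : (p - 1) * t = u := by
    rw [ht, hu, ht]; field_simp
  have hstep2 : ((∑ i ∈ Finset.range k, w i ^ p) / (k:ℝ)) ^ t
      ≤ ((∑ i ∈ Finset.range k, w i) / (k:ℝ)) ^ t * w i0 ^ u := by
    have h1 : ((∑ i ∈ Finset.range k, w i ^ p) / (k:ℝ)) ^ t
        ≤ (((∑ i ∈ Finset.range k, w i) * w i0 ^ (p - 1)) / (k:ℝ)) ^ t := by
      apply Real.rpow_le_rpow (by positivity) _ ht0.le
      gcongr
    have h2 : (((∑ i ∈ Finset.range k, w i) * w i0 ^ (p - 1)) / (k:ℝ)) ^ t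
        = ((∑ i ∈ Finset.range k, w i) / (k:ℝ)) ^ t * w i0 ^ u := by
      rw [mul_div_right_comm, Real.mul_rpow (by positivity) (by positivity),
        ← Real.rpow_mul hM0.le, hud]
    rw [h2] at h1
    exact h1
  have hvlo : 1 / (k:ℝ) ≤ (∑ i ∈ Finset.range k, w i) / ((k:ℝ) * w i0) := by
    rw [div_le_div_iff₀ hκ0 (by positivity)]
    nlinarith
  have hvhi : (∑ i ∈ Finset.range k, w i) / ((k:ℝ) * w i0) ≤ 1 := by
    rw [div_le_one (by positivity)]
    exact hSM
  have hchord := sd_chord hκ1 ht0 hu0 htu hvlo hvhi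
  have hA0 : (0:ℝ) ≤ y * (k:ℝ) / ∑ i ∈ Finset.range k, w i := by positivity
  calc ((k:ℝ) - (k:ℝ) ^ t) / ((k:ℝ) - 1) * (y / w i0)
      + ((k:ℝ) ^ t - 1) / ((k:ℝ) - 1) * (y * k / ∑ i ∈ Finset.range k, w i)
      = (y * (k:ℝ) / ∑ i ∈ Finset.range k, w i) *
        (((k:ℝ) - (k:ℝ) ^ t) / ((k:ℝ) - 1) * ((∑ i ∈ Finset.range k, w i) / ((k:ℝ) * w i0))
          + ((k:ℝ) ^ t - 1) / ((k:ℝ) - 1)) := by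
        have hκm1 : (k:ℝ) - 1 ≠ 0 := by linarith
        field_simp
    _ ≤ (y * (k:ℝ) / ∑ i ∈ Finset.range k, w i) *
        (((∑ i ∈ Finset.range k, w i) / ((k:ℝ) * w i0)) ^ u) :=
        mul_le_mul_of_nonneg_left hchord hA0
    _ = y / (((∑ i ∈ Finset.range k, w i) / (k:ℝ)) ^ t * w i0 ^ u) := by
        have hwpos : (0:ℝ) < (∑ i ∈ Finset.range k, w i) / (k:ℝ) := by positivity
        have h3 : ((∑ i ∈ Finset.range k, w i) / ((k:ℝ) * w i0)) ^ u
            = ((∑ i ∈ Finset.range k, w i) / (k:ℝ)) ^ u / w i0 ^ u := by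
          rw [show (∑ i ∈ Finset.range k, w i) / ((k:ℝ) * w i0)
              = ((∑ i ∈ Finset.range k, w i) / (k:ℝ)) / w i0 by
            rw [div_div]]
          rw [Real.div_rpow hwpos.le hM0.le]
        have h4 : ((∑ i ∈ Finset.range k, w i) / (k:ℝ)) ^ u
            = ((∑ i ∈ Finset.range k, w i) / (k:ℝ))
              / ((∑ i ∈ Finset.range k, w i) / (k:ℝ)) ^ t := by
          rw [eq_div_iff (Real.rpow_pos_of_pos hwpos t).ne', mul_comm,
            ← Real.rpow_add hwpos, htu, Real.rpow_one]
        rw [h3, h4]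
        have hTne : ((∑ i ∈ Finset.range k, w i) / (k:ℝ)) ^ t ≠ 0 :=
          (Real.rpow_pos_of_pos hwpos t).ne'
        have hMune : w i0 ^ u ≠ 0 := (Real.rpow_pos_of_pos hM0 u).ne'
        field_simp
    _ ≤ y / (((∑ i ∈ Finset.range k, w i ^ p) / (k:ℝ)) ^ t) := by
        gcongr

private lemma sd_main (k n : ℕ) (hk : 2 ≤ k) (hn : k ≤ n) (x : ℕ → ℝ)
    (hx : ∀ j, 0 < x j) (hper : ∀ j, x (j + n) = x j)
    (p t u Bv : ℝ) (hp : 1 < p) (ht : t = 1 / p) (hu : u = 1 - t) (hB0 : 0 ≤ Bv)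
    (hBle : (n:ℝ) * Bv ≤ (k:ℝ) *
      ∑ j ∈ Finset.range n, x j / (∑ i ∈ Finset.range k, x (j + i + 1))) :
    (n : ℝ) * Bv ^ t * ((k : ℝ) ^ (-(u * u)) / ((k : ℝ) - 1)) *
        (((k : ℝ) ^ t - 1) ^ t * t ^ (-t)) * (((k : ℝ) ^ u - 1) ^ u * u ^ (-u)) ≤
      ∑ j ∈ Finset.range n, x j / (((∑ i ∈ Finset.range k, x (j + i + 1) ^ p) / (k : ℝ)) ^ t) := by
  classical
  have hk0 : 0 < k := by omega
  have hn0 : 0 < n := by omega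
  have hκ1 : (1:ℝ) < (k:ℝ) := by exact_mod_cast (by omega : 1 < k)
  have hκ0 : (0:ℝ) < (k:ℝ) := by linarith
  have hn0' : (0:ℝ) < (n:ℝ) := by exact_mod_cast hn0
  have hp0 : 0 < p := by linarith
  have ht0 : 0 < t := by rw [ht]; positivity
  have ht1 : t < 1 := by rw [ht, div_lt_one hp0]; linarith
  have hu0 : 0 < u := by rw [hu]; linarith
  have hu1 : u < 1 := by rw [hu]; linarith
  have htu : t + u = 1 := by rw [hu]; ring
  have hκm1 : (0:ℝ) < (k:ℝ) - 1 := by linarith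
  have hct1 : 1 < (k:ℝ) ^ t :=
    Real.one_lt_rpow_iff_of_pos hκ0 |>.2 (Or.inl ⟨hκ1, ht0⟩)
  have hcu1 : 1 < (k:ℝ) ^ u :=
    Real.one_lt_rpow_iff_of_pos hκ0 |>.2 (Or.inl ⟨hκ1, hu0⟩)
  have hctκ : (k:ℝ) ^ t < (k:ℝ) := by
    have := Real.rpow_lt_rpow_of_exponent_lt hκ1 ht1
    rwa [Real.rpow_one] at this
  have hce : (k:ℝ) ^ t * (k:ℝ) ^ u = (k:ℝ) := by
    rw [← Real.rpow_add hκ0, htu, Real.rpow_one]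
  have haa0 : 0 < ((k:ℝ) - (k:ℝ) ^ t) / ((k:ℝ) - 1) := by
    apply div_pos (by linarith) hκm1
  have hbb0 : 0 < ((k:ℝ) ^ t - 1) / ((k:ℝ) - 1) := by
    apply div_pos (by linarith) hκm1
  -- argmax choice
  choose I hImem hImax using fun j : ℕ =>
    Finset.exists_max_image (Finset.range k) (fun i => x (j + i + 1))
      ⟨0, Finset.mem_range.2 hk0⟩
  -- the cyclic map
  obtain ⟨c, L, hc, hL0, hnLk, hLc, hinj⟩ :=
    sd_cycle (n := n) (k := k) hn0 (fun j => (j + (I j + 1)) % n) (fun j => I j + 1)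
      (fun j => by show 1 ≤ I j + 1; omega)
      (fun j => by show I j + 1 ≤ k; have := Finset.mem_range.1 (hImem j); omega)
      (fun j => rfl)
  set h : ℕ → ℕ := fun j => (j + (I j + 1)) % n with hh
  have hEh : ∀ j, x (h j) = x (j + I j + 1) := by
    intro j
    rw [hh]
    exact (sd_mod hper (j + (I j + 1))).symm
  have horb : ∀ i, h^[i] c < n := by
    intro i
    cases i with
    | zero => exact hc
    | succ i =>
      rw [Function.iterate_succ_apply']
      exact Nat.mod_lt _ hn0
  -- telescoping product equals 1
  have hprod : ∏ i ∈ Finset.range L, x (h^[i] c) / x (h^[i + 1] c) = 1 := by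
    rw [sd_telescope (fun i => x (h^[i] c)) (fun i => hx _) L]
    rw [Function.iterate_zero_apply, hLc, div_self (hx c).ne']
  have hL0' : (0:ℝ) < (L:ℝ) := by exact_mod_cast hL0
  -- AM-GM over the cycle
  have hamgm : (L:ℝ) ≤ ∑ i ∈ Finset.range L, x (h^[i] c) / x (h^[i + 1] c) := by
    have hw' : ∑ _i ∈ Finset.range L, (L:ℝ)⁻¹ = 1 := by
      rw [Finset.sum_const, Finset.card_range, nsmul_eq_mul, mul_inv_cancel₀ hL0'.ne']
    have hgm := Real.geom_mean_le_arith_mean_weighted (Finset.range L)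
      (fun _ => (L:ℝ)⁻¹) (fun i => x (h^[i] c) / x (h^[i + 1] c))
      (fun i _ => by positivity) hw'
      (fun i _ => (div_pos (hx _) (hx _)).le)
    rw [Real.finset_prod_rpow _ _ (fun i _ => (div_pos (hx _) (hx _)).le) _, hprod,
      Real.one_rpow, ← Finset.mul_sum] at hgm
    have h2 := mul_le_mul_of_nonneg_left hgm hL0'.le
    rw [mul_one, ← mul_assoc, mul_inv_cancel₀ hL0'.ne', one_mul] at h2
    exact h2
  -- the max-type cyclic sum is at least n/k
  have hSinf : (n:ℝ) / (k:ℝ) ≤ ∑ j ∈ Finset.range n, x j / x (j + I j + 1) := by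
    have h1 : ∑ j ∈ Finset.range n, x j / x (j + I j + 1)
        = ∑ j ∈ Finset.range n, x j / x (h j) :=
      Finset.sum_congr rfl fun j _ => by rw [hEh j]
    have himg : ∑ j ∈ (Finset.range L).image (fun i => h^[i] c), x j / x (h j)
        = ∑ i ∈ Finset.range L, x (h^[i] c) / x (h^[i + 1] c) := by
      rw [Finset.sum_image (fun i hi j hj hij =>
        hinj i j (Finset.mem_range.1 hi) (Finset.mem_range.1 hj) hij)]
      refine Finset.sum_congr rfl fun i _ => ?_
      rw [← Function.iterate_succ_apply' h i c]
    have hsub : (Finset.range L).image (fun i => h^[i] c) ⊆ Finset.range n := by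
      intro j hj
      obtain ⟨i, _, rfl⟩ := Finset.mem_image.1 hj
      exact Finset.mem_range.2 (horb i)
    rw [h1]
    calc (n:ℝ) / (k:ℝ) ≤ (L:ℝ) := by
          rw [div_le_iff₀ hκ0]
          exact_mod_cast hnLk
    _ ≤ ∑ i ∈ Finset.range L, x (h^[i] c) / x (h^[i + 1] c) := hamgm
    _ = ∑ j ∈ (Finset.range L).image (fun i => h^[i] c), x j / x (h j) := himg.symm
    _ ≤ ∑ j ∈ Finset.range n, x j / x (h j) :=
        Finset.sum_le_sum_of_subset_of_nonneg hsub
          (fun j _ _ => (div_pos (hx _) (hx _)).le)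
  -- the ℓ¹ cyclic sum is at least n·B
  have hS1 : (n:ℝ) * Bv ≤ ∑ j ∈ Finset.range n,
      x j * (k:ℝ) / (∑ i ∈ Finset.range k, x (j + i + 1)) := by
    have : ∑ j ∈ Finset.range n, x j * (k:ℝ) / (∑ i ∈ Finset.range k, x (j + i + 1))
        = (k:ℝ) * ∑ j ∈ Finset.range n, x j / (∑ i ∈ Finset.range k, x (j + i + 1)) := by
      rw [Finset.mul_sum]
      exact Finset.sum_congr rfl fun j _ => by ring
    rw [this]
    exact hBle
  -- termwise estimate
  have hterm : ∀ j ∈ Finset.range n,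
      ((k:ℝ) - (k:ℝ) ^ t) / ((k:ℝ) - 1) * (x j / x (j + I j + 1))
        + ((k:ℝ) ^ t - 1) / ((k:ℝ) - 1) *
          (x j * (k:ℝ) / ∑ i ∈ Finset.range k, x (j + i + 1))
      ≤ x j / (((∑ i ∈ Finset.range k, x (j + i + 1) ^ p) / (k:ℝ)) ^ t) :=
    fun j _ => sd_term k hk p t u hp ht hu (x j) (hx j)
      (fun i => x (j + i + 1)) (fun i => hx _) (I j) (hImem j) (hImax j)
  have hsum : ((k:ℝ) - (k:ℝ) ^ t) / ((k:ℝ) - 1) *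
        (∑ j ∈ Finset.range n, x j / x (j + I j + 1))
      + ((k:ℝ) ^ t - 1) / ((k:ℝ) - 1) *
        (∑ j ∈ Finset.range n, x j * (k:ℝ) / (∑ i ∈ Finset.range k, x (j + i + 1)))
      ≤ ∑ j ∈ Finset.range n,
          x j / (((∑ i ∈ Finset.range k, x (j + i + 1) ^ p) / (k:ℝ)) ^ t) := by
    rw [Finset.mul_sum, Finset.mul_sum, ← Finset.sum_add_distrib]
    exact Finset.sum_le_sum hterm
  -- chain with AM-GM
  have hmid : (((k:ℝ) - (k:ℝ) ^ t) / ((k:ℝ) - 1) * ((n:ℝ) / (k:ℝ)) / u) ^ u *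
        (((k:ℝ) ^ t - 1) / ((k:ℝ) - 1) * ((n:ℝ) * Bv) / t) ^ t
      ≤ ∑ j ∈ Finset.range n,
          x j / (((∑ i ∈ Finset.range k, x (j + i + 1) ^ p) / (k:ℝ)) ^ t) := by
    have hp1 : (0:ℝ) ≤ ((k:ℝ) - (k:ℝ) ^ t) / ((k:ℝ) - 1) * ((n:ℝ) / (k:ℝ)) / u := by
      positivity
    have hp2 : (0:ℝ) ≤ ((k:ℝ) ^ t - 1) / ((k:ℝ) - 1) * ((n:ℝ) * Bv) / t := by
      have : (0:ℝ) ≤ (n:ℝ) * Bv := by positivity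
      positivity
    have hgm2 := Real.geom_mean_le_arith_mean2_weighted hu0.le ht0.le hp1 hp2
      (by linarith : u + t = 1)
    have he1 : u * (((k:ℝ) - (k:ℝ) ^ t) / ((k:ℝ) - 1) * ((n:ℝ) / (k:ℝ)) / u)
        = ((k:ℝ) - (k:ℝ) ^ t) / ((k:ℝ) - 1) * ((n:ℝ) / (k:ℝ)) := by
      field_simp
    have he2 : t * (((k:ℝ) ^ t - 1) / ((k:ℝ) - 1) * ((n:ℝ) * Bv) / t)
        = ((k:ℝ) ^ t - 1) / ((k:ℝ) - 1) * ((n:ℝ) * Bv) := by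
      field_simp
    rw [he1, he2] at hgm2
    refine le_trans hgm2 (le_trans ?_ hsum)
    have hle1 : ((k:ℝ) - (k:ℝ) ^ t) / ((k:ℝ) - 1) * ((n:ℝ) / (k:ℝ))
        ≤ ((k:ℝ) - (k:ℝ) ^ t) / ((k:ℝ) - 1) *
          (∑ j ∈ Finset.range n, x j / x (j + I j + 1)) :=
      mul_le_mul_of_nonneg_left hSinf haa0.le
    have hle2 : ((k:ℝ) ^ t - 1) / ((k:ℝ) - 1) * ((n:ℝ) * Bv)
        ≤ ((k:ℝ) ^ t - 1) / ((k:ℝ) - 1) *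
          (∑ j ∈ Finset.range n, x j * (k:ℝ) / (∑ i ∈ Finset.range k, x (j + i + 1))) :=
      mul_le_mul_of_nonneg_left hS1 hbb0.le
    linarith
  refine le_trans (le_of_eq ?_) hmid
  -- the constant identity
  have hXeq : ((k:ℝ) - (k:ℝ) ^ t) / ((k:ℝ) - 1) * ((n:ℝ) / (k:ℝ)) / u
      = (n:ℝ) * ((k:ℝ) ^ (-u) * (((k:ℝ) ^ u - 1) * (((k:ℝ) - 1)⁻¹ * u⁻¹))) := by
    have hκc : (k:ℝ) - (k:ℝ) ^ t = (k:ℝ) ^ t * ((k:ℝ) ^ u - 1) := by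
      rw [mul_sub, hce, mul_one]
    have hκmu : (k:ℝ) ^ (-u) = (k:ℝ) ^ t / (k:ℝ) := by
      rw [show -u = t - 1 by rw [hu]; ring, Real.rpow_sub hκ0, Real.rpow_one]
    rw [hκc, hκmu]
    field_simp
  have hYeq : ((k:ℝ) ^ t - 1) / ((k:ℝ) - 1) * ((n:ℝ) * Bv) / t
      = (n:ℝ) * (Bv * (((k:ℝ) ^ t - 1) * (((k:ℝ) - 1)⁻¹ * t⁻¹))) := by
    field_simp
  rw [hXeq, hYeq]
  have hkmu0 : (0:ℝ) ≤ (k:ℝ) ^ (-u) := (Real.rpow_pos_of_pos hκ0 _).le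
  have hcu0 : (0:ℝ) ≤ (k:ℝ) ^ u - 1 := by linarith
  have hct0 : (0:ℝ) ≤ (k:ℝ) ^ t - 1 := by linarith
  have hrest1 : (0:ℝ) ≤ ((k:ℝ) - 1)⁻¹ * u⁻¹ :=
    mul_nonneg (inv_nonneg.2 hκm1.le) (inv_nonneg.2 hu0.le)
  have hrest2 : (0:ℝ) ≤ ((k:ℝ) - 1)⁻¹ * t⁻¹ :=
    mul_nonneg (inv_nonneg.2 hκm1.le) (inv_nonneg.2 ht0.le)
  rw [Real.mul_rpow hn0'.le (mul_nonneg hkmu0 (mul_nonneg hcu0 hrest1)),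
    Real.mul_rpow hkmu0 (mul_nonneg hcu0 hrest1),
    Real.mul_rpow hcu0 hrest1,
    Real.mul_rpow (inv_nonneg.2 hκm1.le) (inv_nonneg.2 hu0.le),
    Real.mul_rpow hn0'.le (mul_nonneg hB0 (mul_nonneg hct0 hrest2)),
    Real.mul_rpow hB0 (mul_nonneg hct0 hrest2),
    Real.mul_rpow hct0 hrest2,
    Real.mul_rpow (inv_nonneg.2 hκm1.le) (inv_nonneg.2 ht0.le),
    Real.inv_rpow hκm1.le, Real.inv_rpow hu0.le,
    Real.inv_rpow hκm1.le, Real.inv_rpow ht0.le,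
    ← Real.rpow_mul hκ0.le, neg_mul]
  have hNN : (n:ℝ) ^ u * (n:ℝ) ^ t = (n:ℝ) := by
    rw [← Real.rpow_add hn0', show u + t = 1 by linarith, Real.rpow_one]
  have hPQ : ((k:ℝ) - 1) ^ u * ((k:ℝ) - 1) ^ t = (k:ℝ) - 1 := by
    rw [← Real.rpow_add hκm1, show u + t = 1 by linarith, Real.rpow_one]
  rw [Real.rpow_neg ht0.le t, Real.rpow_neg hu0.le u]
  nth_rewrite 1 [← hNN]
  nth_rewrite 1 [← hPQ]
  ring

theorem shapiro_diananda_p_sum_lower_bound (k : ℕ) (hk : 2 ≤ k) (p q : ℝ)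
    (hp : 1 < p) (hpq : 1 / p + 1 / q = 1)
    (B : ℝ)
    (hB : B = sInf { S : ℝ | ∃ n : ℕ, k ≤ n ∧ ∃ x : ℕ → ℝ, (∀ j, 0 < x j) ∧
            (∀ j, x (j + n) = x j) ∧
            S = ((1 : ℝ) / n) * k *
                  ∑ j ∈ Finset.range n, x j / (∑ i ∈ Finset.range k, x (j + i + 1)) })
    (n : ℕ) (hn : k ≤ n) (x : ℕ → ℝ) (hx : ∀ j, 0 < x j) (hper : ∀ j, x (j + n) = x j) :
    ∑ j ∈ Finset.range n,
        x j / (((∑ i ∈ Finset.range k, (x (j + i + 1)) ^ p) / (k : ℝ)) ^ ((1 : ℝ) / p)) ≥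
      (n : ℝ) * B ^ ((1 : ℝ) / p) *
        ((k : ℝ) ^ (-(1 / q ^ 2)) / ((k : ℝ) - 1)) *
        (((k : ℝ) ^ (1 / p) - 1) ^ (1 / p) * (1 / p) ^ (-(1 / p))) *
        (((k : ℝ) ^ (1 / q) - 1) ^ (1 / q) * (1 / q) ^ (-(1 / q))) := by
  have hp0 : 0 < p := by linarith
  have hqu : 1 / q = 1 - 1 / p := by linarith
  set 𝒮 := { S : ℝ | ∃ n : ℕ, k ≤ n ∧ ∃ x : ℕ → ℝ, (∀ j, 0 < x j) ∧
      (∀ j, x (j + n) = x j) ∧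
      S = ((1 : ℝ) / n) * k *
        ∑ j ∈ Finset.range n, x j / (∑ i ∈ Finset.range k, x (j + i + 1)) } with h𝒮
  have hset0 : ∀ S ∈ 𝒮, (0:ℝ) ≤ S := by
    rintro S ⟨n', hn', x', hx', hper', rfl⟩
    have h1 : (0:ℝ) ≤ ∑ j ∈ Finset.range n',
        x' j / (∑ i ∈ Finset.range k, x' (j + i + 1)) :=
      Finset.sum_nonneg fun j _ => div_nonneg (hx' j).le
        (Finset.sum_nonneg fun i _ => (hx' _).le)
    have h2 : (0:ℝ) ≤ ((1:ℝ) / n') * k := by positivity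
    exact mul_nonneg h2 h1
  have hB0 : 0 ≤ B := by
    rw [hB]
    exact Real.sInf_nonneg hset0
  have hmem : ((1 : ℝ) / n) * k *
      ∑ j ∈ Finset.range n, x j / (∑ i ∈ Finset.range k, x (j + i + 1)) ∈ 𝒮 := by
    rw [h𝒮]
    exact ⟨n, hn, x, hx, hper, rfl⟩
  have hle := csInf_le ⟨0, hset0⟩ hmem
  rw [← hB] at hle
  have hn0' : (0:ℝ) < (n:ℝ) := by
    have : 0 < n := by omega
    exact_mod_cast this
  have hBle : (n:ℝ) * B ≤ (k:ℝ) *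
      ∑ j ∈ Finset.range n, x j / (∑ i ∈ Finset.range k, x (j + i + 1)) := by
    have h2 := mul_le_mul_of_nonneg_left hle hn0'.le
    calc (n:ℝ) * B ≤ (n:ℝ) * (((1 : ℝ) / n) * k *
        ∑ j ∈ Finset.range n, x j / (∑ i ∈ Finset.range k, x (j + i + 1))) := h2
    _ = (k:ℝ) * ∑ j ∈ Finset.range n, x j / (∑ i ∈ Finset.range k, x (j + i + 1)) := by
        field_simp
  have main := sd_main k n hk hn x hx hper p (1/p) (1 - 1/p) B hp rfl rfl hB0 hBle
  rw [ge_iff_le]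
  have e1 : -(1 / q ^ 2) = -((1 - 1/p) * (1 - 1/p)) := by
    have h3 : 1 / q ^ 2 = (1/q) * (1/q) := by ring
    rw [h3, hqu]
  rw [e1, hqu]
  exact main
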